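/- Let (W,S) be a Coxeter system and φ : W → Γ a weight function with values in an abelian group Γ. Then there exists a unique group homomorphism φ̄ : ℤ[S̄] → Γ such that φ = φ̄ ∘ 𝓵, where 𝓵 : W → ℤ[S̄] is the universal weight function. Consequently there are canonical bijections between the set of weight functions W → Γ, the set of maps S̄ → Γ, and the set of group homomorphisms ℤ[S̄] → Γ. -/

import Mathlib

open CoxeterSystem Classical

/-- Given a weight function `φ : W → Γ`, there is a unique group homomorphism
`φ̄ : ℤ[S̄] → Γ` with `φ = φ̄ ∘ 𝓵`, where `𝓵 : W → ℤ[S̄] = (S̄ →₀ ℤ)` is the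
universal weight function `𝓵(w) = Σ_ω ℓ_ω(w)·ω`.  Consequently weight functions
`W → Γ` correspond bijectively to homomorphisms `ℤ[S̄] → Γ` (and to maps `S̄ → Γ`). -/
-- (using classical decidability for List.filter)
theorem stmt1 {B W Γ : Type*} [Group W] [AddCommGroup Γ]
    {M : CoxeterMatrix B} (cs : CoxeterSystem M W)
    (r : Setoid B) (hr : ∀ i j : B, r.r i j ↔ IsConj (cs.simple i) (cs.simple j))
    (ℓc : Quotient r → W → ℕ)
    (hℓc : ∀ (w : W) (l : List B), cs.wordProd l = w → cs.IsReduced l →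
      ∀ ω : Quotient r, ℓc ω w = (l.filter (fun i => decide (Quotient.mk r i = ω))).length)
    (bl : W → (Quotient r →₀ ℤ))
    (hbl : ∀ (w : W) (ω : Quotient r), bl w ω = (ℓc ω w : ℤ))
    (φ : W → Γ)
    (hφ : ∀ w w' : W, cs.length (w * w') = cs.length w + cs.length w' →
      φ (w * w') = φ w + φ w') :
    ∃! φbar : (Quotient r →₀ ℤ) →+ Γ, ∀ w : W, φbar (bl w) = φ w := by
  classical
  have hφ1 : φ 1 = 0 := by
    have h := hφ 1 1 (by simp)
    rw [one_mul] at h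
    exact (add_left_cancel (h.symm.trans (add_zero _).symm))
  -- a weight function is constant on conjugate simple reflections
  have key : ∀ n (i j : B) (c : W), cs.length c = n → c * cs.simple i = cs.simple j * c →
      φ (cs.simple i) = φ (cs.simple j) := by
    intro n
    induction n using Nat.strong_induction_on with
    | _ n ih =>
      intro i j c hn hc
      rcases cs.length_mul_simple c i with h | h
      · have h1 : φ (c * cs.simple i) = φ c + φ (cs.simple i) := by
          apply hφ
          rw [h, cs.length_simple]
        have h2 : φ (cs.simple j * c) = φ (cs.simple j) + φ c := by
          apply hφ
          rw [← hc, h, cs.length_simple]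
          ring
        rw [hc, h2] at h1
        have := h1.symm
        rw [add_comm (φ (cs.simple j)) (φ c)] at this
        exact add_left_cancel this
      · have hci : (c * cs.simple i) * cs.simple i = cs.simple j * (c * cs.simple i) := by
          rw [mul_assoc, cs.simple_mul_simple_self, mul_one, ← mul_assoc, ← hc,
            mul_assoc, cs.simple_mul_simple_self, mul_one]
        exact ih (cs.length (c * cs.simple i)) (by omega) i j (c * cs.simple i) rfl hci
  have hconst : ∀ i j : B, r.r i j → φ (cs.simple i) = φ (cs.simple j) := by
    intro i j hij
    obtain ⟨c, hc⟩ := (hr i j).mp hij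
    exact key (cs.length (c : W)) i j c rfl hc
  -- the induced map on the quotient
  set g : Quotient r → Γ := Quotient.lift (fun i => φ (cs.simple i)) hconst with hg
  set φbar : (Quotient r →₀ ℤ) →+ Γ :=
    Finsupp.liftAddHom (fun ω => (zmultiplesHom Γ) (g ω)) with hφbar
  have hφbar_single : ∀ (ω : Quotient r) (n : ℤ),
      φbar (Finsupp.single ω n) = n • g ω := by
    intro ω n
    rw [hφbar, Finsupp.liftAddHom_apply_single]
    rfl
  -- bl 1 = 0
  have hbl1 : bl 1 = 0 := by
    ext ω
    rw [hbl, hℓc 1 [] (by simp) (by simp [CoxeterSystem.IsReduced]) ω]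
    simp
  -- bl behaves well on reduced cons
  have hbl_cons : ∀ (i : B) (l : List B), cs.IsReduced (i :: l) →
      bl (cs.wordProd (i :: l)) = Finsupp.single (Quotient.mk r i) 1 + bl (cs.wordProd l) := by
    intro i l hred
    have hredl : cs.IsReduced l := by
      have := hred.drop 1
      simpa using this
    ext ω
    rw [Finsupp.add_apply, hbl, hbl, hℓc _ (i :: l) rfl hred ω, hℓc _ l rfl hredl ω,
      List.filter_cons, Finsupp.single_apply]
    by_cases hiw : Quotient.mk r i = ω
    · simp [hiw]
      push_cast
      ring
    · simp [hiw]
  -- main computation along reduced words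
  have main : ∀ l : List B, cs.IsReduced l → φbar (bl (cs.wordProd l)) = φ (cs.wordProd l) := by
    intro l
    induction l with
    | nil =>
      intro _
      rw [cs.wordProd_nil, hbl1, map_zero, hφ1]
    | cons i l ihl =>
      intro hred
      have hredl : cs.IsReduced l := by
        have := hred.drop 1
        simpa using this
      have hlen : cs.length (cs.simple i * cs.wordProd l)
          = cs.length (cs.simple i) + cs.length (cs.wordProd l) := by
        rw [← cs.wordProd_cons, hred, hredl, cs.length_simple, List.length_cons]
        ring
      rw [hbl_cons i l hred, map_add, hφbar_single, one_smul, cs.wordProd_cons,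
        hφ _ _ hlen, ihl hredl]
      rfl
  refine ⟨φbar, ?_, ?_⟩
  · intro w
    obtain ⟨l, hred, rfl⟩ := cs.exists_reduced_word' w
    exact main l hred
  · intro ψ hψ
    apply Finsupp.addHom_ext
    intro ω n
    obtain ⟨i, rfl⟩ := Quotient.exists_rep ω
    have hsingle : Finsupp.single (Quotient.mk r i) (1 : ℤ) = bl (cs.simple i) := by
      have hred : cs.IsReduced [i] := by
        simp [CoxeterSystem.IsReduced, cs.length_simple]
      have := hbl_cons i [] hred
      rw [cs.wordProd_nil, hbl1] at this
      simpa using this.symm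
    have h1 : ψ (Finsupp.single (Quotient.mk r i) (1 : ℤ))
        = φbar (Finsupp.single (Quotient.mk r i) (1 : ℤ)) := by
      rw [hsingle, hψ (cs.simple i)]
      obtain ⟨l, hred, hl⟩ := cs.exists_reduced_word' (cs.simple i)
      rw [hl] at hsingle ⊢
      exact (main l hred).symm
    calc ψ (Finsupp.single (Quotient.mk r i) n) = ψ (n • Finsupp.single (Quotient.mk r i) (1 : ℤ)) := by
          rw [Finsupp.smul_single, smul_eq_mul, mul_one]
      _ = n • ψ (Finsupp.single (Quotient.mk r i) (1 : ℤ)) := map_zsmul ψ _ _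
      _ = n • φbar (Finsupp.single (Quotient.mk r i) (1 : ℤ)) := by rw [h1]
      _ = φbar (Finsupp.single (Quotient.mk r i) n) := by
          rw [← map_zsmul, Finsupp.smul_single, smul_eq_mul, mul_one]
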